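/- Structure constants via localization: the Schubert product coefficients satisfy p_{u,v}^w = Σ_{x∈W} d_{u,x}·d_{v,x}·c_{w,x}; in particular p_{u,v}^v = d_{u,v}. -/

import Mathlib

open Classical in
/-- structure constants via localization: the Schubert structure
constants satisfy `p_{u,v}^w = Σ_{x ∈ W} d_{u,x} · d_{v,x} · c_{w,x}`; in
particular `p_{u,v}^v = d_{u,v}`. -/
theorem structure_constants_via_localization
    {B W : Type*} [Group W] [Fintype W] {M : CoxeterMatrix B}
    (cs : CoxeterSystem M W)
    {Q : Type*} [CommRing Q]
    (act : W →* RingAut Q)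
    (αQ : B → Q) (hα : ∀ i, IsUnit (αQ i))
    {A : Type*} [Ring A] [Module Q A]
    (ι : Q →+* A) (δ : W →* A)
    (hsmul : ∀ (q : Q) (a : A), q • a = ι q * a)
    (hδι : ∀ (x : W) (q : Q), δ x * ι q = ι (act x q) * δ x)
    (bδ : Module.Basis W Q A) (hbδ : ∀ x, (bδ x : A) = δ x)
    (Y : W → A)
    (hY : ∀ l : List B, cs.IsReduced l →
      Y (cs.wordProd l) =
        (l.map (fun i =>
          ι (Ring.inverse (αQ i)) * (δ (cs.simple i) - δ 1))).prod)
    (bY : Module.Basis W Q A) (hbY : ∀ x, (bY x : A) = Y x)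
    (c : W → W → Q) (hc : ∀ w x, c w x = bδ.repr (Y w) x)
    (d : W → W → Q) (hd : ∀ u x, d u x = bY.repr (δ x) u)
    (ξ : W → (A →ₗ[Q] Q))
    (hξ : ∀ u x : W, ξ u (Y x) = if u = x then 1 else 0)
    (mulD : (A →ₗ[Q] Q) → (A →ₗ[Q] Q) → (A →ₗ[Q] Q))
    (hmul : ∀ (f g : A →ₗ[Q] Q) (x : W), mulD f g (δ x) = f (δ x) * g (δ x))
    (p : W → W → W → Q)
    (hp : ∀ u v : W, mulD (ξ u) (ξ v) = ∑ w : W, p u v w • ξ w)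
    (u v : W) :
    (∀ w : W, p u v w = ∑ x : W, d u x * d v x * c w x) ∧
    p u v v = d u v := by
  classical
  set f : B → A := fun i => ι (Ring.inverse (αQ i)) * (δ (cs.simple i) - δ 1) with hf
  -- ξ u evaluated on the δ basis gives d
  have key1 : ∀ (u x : W), ξ u (δ x) = d u x := by
    intro u x
    conv_lhs => rw [← bY.sum_repr (δ x)]
    rw [map_sum]
    simp only [map_smul, smul_eq_mul, hbY, hξ, mul_ite, mul_one, mul_zero]
    simp [hd, Finset.sum_ite_eq]
  -- expansion of Y in the δ basis
  have Yexp : ∀ w : W, Y w = ∑ x : W, c w x • δ x := by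
    intro w
    conv_lhs => rw [← bδ.sum_repr (Y w)]
    simp only [hc, hbδ]
  -- Part 1
  have part1 : ∀ w : W, p u v w = ∑ x : W, d u x * d v x * c w x := by
    intro w
    have hL : (mulD (ξ u) (ξ v)) (Y w) = ∑ x : W, d u x * d v x * c w x := by
      conv_lhs => rw [Yexp w]
      rw [map_sum]
      simp only [map_smul, smul_eq_mul, hmul, key1]
      exact Finset.sum_congr rfl fun x _ => by ring
    have hR : (mulD (ξ u) (ξ v)) (Y w) = p u v w := by
      rw [hp]
      simp only [LinearMap.sum_apply, LinearMap.smul_apply, hξ, smul_eq_mul,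
        mul_ite, mul_one, mul_zero]
      simp [Finset.sum_ite_eq']
    rw [← hR, hL]
  -- basic multiplication identity
  have hA : ∀ (q₁ q₂ : Q) (y z : W),
      (ι q₁ * δ y) * (ι q₂ * δ z) = ι (q₁ * act y q₂) * δ (y * z) := by
    intro q₁ q₂ y z
    rw [mul_assoc, ← mul_assoc (δ y), hδι, mul_assoc, ← map_mul δ, ← mul_assoc, ← map_mul ι]
  -- multiplying a span of δ's by ι q * δ s
  have mulspan : ∀ (s : W) (T : Set W) (a : A), a ∈ Submodule.span Q (δ '' T) →
      ∀ q : Q, (ι q * δ s) * a ∈ Submodule.span Q (δ '' ((s * ·) '' T)) := by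
    intro s T a ha
    induction ha using Submodule.span_induction with
    | mem a hmem =>
        intro q
        obtain ⟨y, hy, rfl⟩ := hmem
        have : (ι q * δ s) * δ y = q • δ (s * y) := by
          rw [hsmul, mul_assoc, ← map_mul]
        rw [this]
        exact Submodule.smul_mem _ _ (Submodule.subset_span ⟨s * y, ⟨y, hy, rfl⟩, rfl⟩)
    | zero => intro q; simp only [mul_zero]; exact Submodule.zero_mem _
    | add x y hx hy ihx ihy =>
        intro q; rw [mul_add]; exact Submodule.add_mem _ (ihx q) (ihy q)
    | smul q' x hx ih =>
        intro q
        have : (ι q * δ s) * (q' • x) = (ι (q * act s q') * δ s) * x := by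
          rw [hsmul, ← mul_assoc, mul_assoc (ι q), hδι, ← mul_assoc (ι q), ← map_mul]
        rw [this]; exact ih (q * act s q')
  -- the Y products are triangular w.r.t. length
  have prodspan : ∀ l : List B,
      ∃ q : Q, IsUnit q ∧
        (l.map f).prod - q • δ (cs.wordProd l) ∈
          Submodule.span Q (δ '' {x : W | cs.length x < l.length}) := by
    intro l
    induction l with
    | nil =>
        refine ⟨1, isUnit_one, ?_⟩
        simp
    | cons i t ih =>
        obtain ⟨q, hq, hr⟩ := ih
        set a := Ring.inverse (αQ i) with ha
        have haU : IsUnit a := isUnit_ringInverse.mpr (hα i)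
        set s := cs.simple i with hs
        set wt := cs.wordProd t with hwt
        have hfi : f i = ι a * δ s - ι a := by
          rw [hf]
          simp only [mul_sub, map_one, mul_one]
          rfl
        refine ⟨a * act s q, haU.mul (hq.map (act s)), ?_⟩
        set r := (t.map f).prod - q • δ wt with hrdef
        have hwp : cs.wordProd (i :: t) = s * wt := cs.wordProd_cons i t
        have e1 : f i * (q • δ wt) = (a * act s q) • δ (s * wt) - (a * q) • δ wt := by
          rw [hfi, hsmul, sub_mul, hA, hsmul, hsmul, ← mul_assoc, ← map_mul]
        have main_eq : ((i :: t).map f).prod - (a * act s q) • δ (cs.wordProd (i :: t)) =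
            f i * r - (a * q) • δ wt := by
          rw [hwp, List.map_cons, List.prod_cons,
            show (t.map f).prod = q • δ wt + r from (add_sub_cancel _ _).symm,
            mul_add, e1]
          abel
        rw [main_eq]
        have hsub1 : ((s * ·) '' {x : W | cs.length x < t.length}) ⊆
            {x : W | cs.length x < (i :: t).length} := by
          rintro _ ⟨y, hy, rfl⟩
          have h1 := cs.length_mul_le s y
          have h2 : cs.length s = 1 := cs.length_simple i
          simp only [Set.mem_setOf_eq, List.length_cons] at *
          omega
        have hsub2 : ({x : W | cs.length x < t.length} : Set W) ⊆
            {x : W | cs.length x < (i :: t).length} := by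
          intro y hy
          simp only [Set.mem_setOf_eq, List.length_cons] at *
          omega
        have hfir : f i * r ∈
            Submodule.span Q (δ '' {x : W | cs.length x < (i :: t).length}) := by
          have h1 : (ι a * δ s) * r ∈
              Submodule.span Q (δ '' ((s * ·) '' {x : W | cs.length x < t.length})) :=
            mulspan s _ r hr a
          have h1' := Submodule.span_mono (Set.image_mono (f := δ) hsub1) h1
          have h2 : ι a * r ∈
              Submodule.span Q (δ '' {x : W | cs.length x < (i :: t).length}) := by
            rw [← hsmul]
            exact Submodule.smul_mem _ _ (Submodule.span_mono (Set.image_mono (f := δ) hsub2) hr)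
          rw [hfi, sub_mul]
          exact Submodule.sub_mem _ h1' h2
        have hwtm : δ wt ∈
            Submodule.span Q (δ '' {x : W | cs.length x < (i :: t).length}) := by
          refine Submodule.subset_span ⟨wt, ?_, rfl⟩
          have := cs.length_wordProd_le t
          simp only [Set.mem_setOf_eq, List.length_cons, hwt]
          omega
        exact Submodule.sub_mem _ hfir (Submodule.smul_mem _ _ hwtm)
  -- Y w lies in the span of δ x with x = w or ℓ x < ℓ w
  have Ymem : ∀ w : W, Y w ∈
      Submodule.span Q (δ '' insert w {x : W | cs.length x < cs.length w}) := by
    intro w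
    obtain ⟨l, hlred, hlw⟩ := cs.exists_reduced_word' w
    obtain ⟨q, hq, hr⟩ := prodspan l
    have hlen : l.length = cs.length w := by rw [hlw]; exact (hlred).symm
    have hYw : Y w = ((l.map f).prod - q • δ (cs.wordProd l)) + q • δ w := by
      rw [hlw, hY l hlred, sub_add_cancel]
    rw [hYw]
    refine Submodule.add_mem _ ?_
      (Submodule.smul_mem _ _ (Submodule.subset_span ⟨w, Set.mem_insert _ _, rfl⟩))
    rw [hlen] at hr
    exact Submodule.span_mono (Set.image_mono (f := δ) (Set.subset_insert _ _)) hr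
  -- c triangularity
  have ctri : ∀ w x : W, x ≠ w → ¬ (cs.length x < cs.length w) → c w x = 0 := by
    intro w x h1 h2
    have himg : (δ '' insert w {x : W | cs.length x < cs.length w}) =
        (⇑bδ '' insert w {x : W | cs.length x < cs.length w}) :=
      Set.image_congr' fun y => (hbδ y).symm
    have hmem := Ymem w
    rw [himg] at hmem
    have hs := bδ.repr_support_subset_of_mem_span _ hmem
    by_contra hne
    have : x ∈ (bδ.repr (Y w)).support := by
      rw [Finsupp.mem_support_iff]; rw [hc] at hne; exact hne
    have := hs this
    rcases this with h | h
    · exact h1 h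
    · exact h2 h
  -- δ x lies in the span of Y u with u = x or ℓ u < ℓ x
  have deltaspan : ∀ x : W, δ x ∈
      Submodule.span Q (Y '' insert x {u : W | cs.length u < cs.length x}) := by
    suffices h : ∀ n : ℕ, ∀ x : W, cs.length x ≤ n → δ x ∈
        Submodule.span Q (Y '' insert x {u : W | cs.length u < cs.length x}) from
      fun x => h (cs.length x) x le_rfl
    intro n
    induction n using Nat.strong_induction_on with
    | _ n ih =>
      intro x hx
      obtain ⟨l, hlred, hlw⟩ := cs.exists_reduced_word' x
      obtain ⟨q, hq, hr⟩ := prodspan l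
      have hlen : l.length = cs.length x := by rw [hlw]; exact (hlred).symm
      have hYx : Y x = (l.map f).prod := by rw [hlw]; exact hY l hlred
      have hrspan : Y x - q • δ x ∈
          Submodule.span Q (δ '' {u : W | cs.length u < cs.length x}) := by
        rw [hYx]
        rw [← hlw, hlen] at hr
        exact hr
      have hsub : Submodule.span Q (δ '' {u : W | cs.length u < cs.length x}) ≤
          Submodule.span Q (Y '' {u : W | cs.length u < cs.length x}) := by
        rw [Submodule.span_le]
        rintro _ ⟨y, hy, rfl⟩
        simp only [Set.mem_setOf_eq] at hy
        have hyn : cs.length y < n := lt_of_lt_of_le hy hx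
        have hmem := ih (cs.length y) hyn y le_rfl
        refine Submodule.span_mono (Set.image_mono (f := Y) ?_) hmem
        intro z hz
        rcases hz with h | h
        · subst h; exact hy
        · exact lt_trans h hy
      have h1 : Y x - q • δ x ∈
          Submodule.span Q (Y '' insert x {u : W | cs.length u < cs.length x}) :=
        Submodule.span_mono (Set.image_mono (f := Y) (Set.subset_insert _ _)) (hsub hrspan)
      have h2 : Y x ∈
          Submodule.span Q (Y '' insert x {u : W | cs.length u < cs.length x}) :=
        Submodule.subset_span ⟨x, Set.mem_insert _ _, rfl⟩
      have hδx : δ x = (↑hq.unit⁻¹ : Q) • (Y x - (Y x - q • δ x)) := by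
        rw [sub_sub_cancel, smul_smul, IsUnit.val_inv_mul, one_smul]
      rw [hδx]
      exact Submodule.smul_mem _ _ (Submodule.sub_mem _ h2 h1)
  -- d triangularity
  have dtri : ∀ u x : W, u ≠ x → ¬ (cs.length u < cs.length x) → d u x = 0 := by
    intro u x h1 h2
    have himg : (Y '' insert x {u : W | cs.length u < cs.length x}) =
        (⇑bY '' insert x {u : W | cs.length u < cs.length x}) :=
      Set.image_congr' fun y => (hbY y).symm
    have hmem := deltaspan x
    rw [himg] at hmem
    have hs := bY.repr_support_subset_of_mem_span _ hmem
    by_contra hne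
    have : u ∈ (bY.repr (δ x)).support := by
      rw [Finsupp.mem_support_iff]; rw [hd] at hne; exact hne
    have := hs this
    rcases this with h | h
    · exact h1 h
    · exact h2 h
  -- off-diagonal terms vanish
  have kill : ∀ x : W, x ≠ v → d v x * c v x = 0 := by
    intro x hx
    by_cases hlt : cs.length v < cs.length x
    · rw [ctri v x hx (by omega), mul_zero]
    · rw [dtri v x (fun h => hx h.symm) hlt, zero_mul]
  -- the diagonal pairing is 1
  have orthv : c v v * d v v = 1 := by
    have h1 : (1 : Q) = ∑ x : W, c v x * d v x := by
      calc (1 : Q) = ξ v (Y v) := by rw [hξ v v]; simp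
        _ = ∑ x : W, c v x * d v x := by
            rw [Yexp v, map_sum]
            simp only [map_smul, smul_eq_mul, key1]
    rw [Finset.sum_eq_single v
      (fun x _ hx => by rw [mul_comm]; exact kill x hx)
      (fun h => absurd (Finset.mem_univ v) h)] at h1
    exact h1.symm
  refine ⟨part1, ?_⟩
  rw [part1 v]
  rw [Finset.sum_eq_single v
    (fun x _ hx => by rw [mul_assoc, kill x hx, mul_zero])
    (fun h => absurd (Finset.mem_univ v) h)]
  rw [mul_assoc, mul_comm (d v v), orthv, mul_one]
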